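/- Let q ∈ ℝ and n ≥ 0. The (n+1) × (n+1) real matrix A with entries A i j = q^{|i−j|} (indices i, j ∈ {0,…,n}) has determinant det A = (1 − q²)ⁿ. -/

import Mathlib

open Matrix

theorem det_pow_abs_sub (q : ℝ) (n : ℕ) :
    (Matrix.of fun i j : Fin (n + 1) => q ^ ((i : ℤ) - (j : ℤ)).natAbs).det
      = (1 - q ^ 2) ^ n := by
  induction n with
  | zero => simp [Matrix.det_fin_one]
  | succ n ih =>
    set A : Matrix (Fin (n+2)) (Fin (n+2)) ℝ :=
      Matrix.of fun i j => q ^ ((i : ℤ) - (j : ℤ)).natAbs with hA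
    have h01 : (0 : Fin (n+2)) ≠ 1 := by
      simp [Fin.ext_iff]
    have hdet := Matrix.det_updateRow_add_smul_self A h01 (-q)
    set B := A.updateRow 0 (A 0 + (-q) • A 1) with hB
    have hB0 : ∀ j : Fin (n+2), B 0 j = if j = 0 then 1 - q^2 else 0 := by
      intro j
      by_cases hj : j = 0
      · subst hj
        simp [hB, hA, Matrix.updateRow_self]
        ring
      · have hj1 : 1 ≤ (j : ℕ) := Nat.one_le_iff_ne_zero.mpr (Fin.val_ne_zero_iff.mpr hj)
        simp only [hB, Matrix.updateRow_self, Pi.add_apply, Pi.smul_apply, smul_eq_mul, hA,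
          Matrix.of_apply, if_neg hj]
        have h0 : ((0 : Fin (n+2)) : ℤ) - (j : ℤ) = -(j : ℤ) := by simp
        have h1 : (((1 : Fin (n+2)) : ℤ) - (j : ℤ)).natAbs = (j : ℕ) - 1 := by
          simp only [Fin.val_one]
          omega
        rw [h0, h1]
        have : ((-(j : ℤ)).natAbs) = (j : ℕ) := by omega
        rw [this]
        have : q ^ (j : ℕ) = q * q ^ ((j : ℕ) - 1) := by
          conv_lhs => rw [show (j : ℕ) = 1 + ((j : ℕ) - 1) by omega]
          rw [pow_add, pow_one]
        rw [this]; ring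
    rw [← hdet, Matrix.det_succ_row_zero]
    rw [Finset.sum_eq_single 0]
    · have hsub : (B.submatrix Fin.succ (Fin.succAbove 0)).det = (1 - q^2)^n := by
        have : B.submatrix Fin.succ (Fin.succAbove 0)
            = Matrix.of fun i j : Fin (n + 1) => q ^ ((i : ℤ) - (j : ℤ)).natAbs := by
          ext i j
          simp [hB, Matrix.updateRow_apply, Fin.succ_ne_zero, hA, Fin.succAbove,
            Fin.val_succ]
        rw [this, ih]
      rw [hsub, hB0 0]
      simp [pow_succ]
      ring
    · intro j _ hj
      rw [hB0 j, if_neg hj]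
      ring
    · intro h; simp at h
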